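/- For positive integers s ≥ 1 and real x > 0, ∫_x^∞ u^{-(s+1/2)} e^{-u} du = e^{-x}/(2s−1)!! · Σ_{r=1}^{s−1} 2^r (−1)^{r−1} (2s−2r−1)!! x^{-(s−r)−1/2} + ((−1)^{s−1} 2^s/(2s−1)!!) [x^{-1/2} e^{-x} − ∫_x^∞ u^{-1/2} e^{-u} du]. -/

import Mathlib

open Real MeasureTheory Finset Nat

lemma my_intOn (a : ℝ) (ha : 0 ≤ a) {x : ℝ} (hx : 0 < x) :
    IntegrableOn (fun u : ℝ => u ^ (-a) * Real.exp (-u)) (Set.Ioi x) := by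
  have hmeas : AEStronglyMeasurable (fun u : ℝ => u ^ (-a) * Real.exp (-u))
      (volume.restrict (Set.Ioi x)) :=
    ((measurable_id.pow_const _).mul (Real.measurable_exp.comp measurable_neg)).aestronglyMeasurable
  have hint : IntegrableOn (fun u : ℝ => x ^ (-a) * Real.exp (-(1:ℝ) * u)) (Set.Ioi x) :=
    (exp_neg_integrableOn_Ioi x one_pos).const_mul _
  refine Integrable.mono' (by simpa using hint : IntegrableOn (fun u : ℝ => x ^ (-a) * Real.exp (-u)) (Set.Ioi x) volume) hmeas ?_
  filter_upwards [MeasureTheory.ae_restrict_mem measurableSet_Ioi] with u hu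
  have hu' : x ≤ u := le_of_lt hu
  have h0 : (0:ℝ) < u := lt_trans hx hu
  rw [Real.norm_eq_abs, abs_mul, abs_of_nonneg (Real.rpow_nonneg h0.le _),
    abs_of_nonneg (Real.exp_nonneg _)]
  exact mul_le_mul_of_nonneg_right
    (Real.rpow_le_rpow_of_nonpos hx hu' (neg_nonpos.mpr ha)) (Real.exp_nonneg _)

lemma my_ibp (a : ℝ) (ha : 0 < a) {x : ℝ} (hx : 0 < x) :
    ∫ u in Set.Ioi x, u ^ (-(a + 1)) * Real.exp (-u)
      = (x ^ (-a) * Real.exp (-x) - ∫ u in Set.Ioi x, u ^ (-a) * Real.exp (-u)) / a := by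
  set F : ℝ → ℝ := fun u => u ^ (-a) * Real.exp (-u) with hF
  set F' : ℝ → ℝ := fun u => (-a * u ^ (-a - 1)) * Real.exp (-u) + u ^ (-a) * (-Real.exp (-u))
    with hF'
  have hderiv : ∀ u ∈ Set.Ici x, HasDerivAt F (F' u) u := by
    intro u hu
    have h0 : u ≠ 0 := ne_of_gt (lt_of_lt_of_le hx hu)
    have h1 : HasDerivAt (fun u : ℝ => u ^ (-a)) (-a * u ^ (-a - 1)) u :=
      Real.hasDerivAt_rpow_const (Or.inl h0)
    have h2 : HasDerivAt (fun u : ℝ => Real.exp (-u)) (-Real.exp (-u)) u := by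
      simpa [Function.comp_def] using (Real.hasDerivAt_exp (-u)).comp u (hasDerivAt_neg u)
    exact h1.mul h2
  have htend : Filter.Tendsto F Filter.atTop (nhds 0) := by
    have := tendsto_rpow_mul_exp_neg_mul_atTop_nhds_zero (-a) 1 one_pos
    simpa using this
  have hint1 : IntegrableOn (fun u : ℝ => u ^ (-(a+1)) * Real.exp (-u)) (Set.Ioi x) :=
    my_intOn (a+1) (by linarith) hx
  have hint2 : IntegrableOn (fun u : ℝ => u ^ (-a) * Real.exp (-u)) (Set.Ioi x) :=
    my_intOn a ha.le hx
  have hF'eq : ∀ u : ℝ, F' u = (-a) * (u ^ (-(a+1)) * Real.exp (-u)) - (u ^ (-a) * Real.exp (-u)) := by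
    intro u; simp only [hF']; rw [show -a - 1 = -(a+1) by ring]; ring
  have hintF' : IntegrableOn F' (Set.Ioi x) := by
    have : F' = fun u => (-a) * (u ^ (-(a+1)) * Real.exp (-u)) - (u ^ (-a) * Real.exp (-u)) :=
      funext hF'eq
    rw [this]
    exact (hint1.const_mul _).sub hint2
  have key := integral_Ioi_of_hasDerivAt_of_tendsto
    (f := F) (f' := F') (a := x)
    ((hderiv x (Set.mem_Ici.mpr le_rfl)).continuousAt.continuousWithinAt)
    (fun u hu => hderiv u (Set.mem_Ici.mpr (le_of_lt hu))) hintF' htend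
  have hsplit : ∫ u in Set.Ioi x, F' u
      = (-a) * (∫ u in Set.Ioi x, u ^ (-(a+1)) * Real.exp (-u))
        - ∫ u in Set.Ioi x, u ^ (-a) * Real.exp (-u) := by
    simp_rw [hF'eq]
    rw [integral_sub (hint1.const_mul _) hint2, integral_const_mul]
  rw [hsplit] at key
  have hFx : F x = x ^ (-a) * Real.exp (-x) := rfl
  rw [hFx] at key
  rw [eq_div_iff (ne_of_gt ha)]
  linarith [key]

theorem stmt_11 (s : ℕ) (hs : 1 ≤ s) (x : ℝ) (hx : 0 < x) :
    ∫ u in Set.Ioi x, u ^ (-((s : ℝ) + 1/2)) * Real.exp (-u) =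
      Real.exp (-x) / ((2 * s - 1)‼ : ℝ) *
        ∑ r ∈ Finset.Icc 1 (s - 1),
          (2 : ℝ) ^ r * (-1 : ℝ) ^ (r - 1) * ((2 * s - 2 * r - 1)‼ : ℝ)
            * x ^ (-((s : ℝ) - (r : ℝ)) - 1/2)
      + ((-1 : ℝ) ^ (s - 1) * 2 ^ s / ((2 * s - 1)‼ : ℝ)) *
          (x ^ (-(1 : ℝ)/2) * Real.exp (-x)
            - ∫ u in Set.Ioi x, u ^ (-(1 : ℝ)/2) * Real.exp (-u)) := by
  induction s, hs using Nat.le_induction with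
  | base =>
    have e1 : -(((1:ℕ) : ℝ) + 1/2) = -((1:ℝ)/2 + 1) := by norm_num
    have e2 : -(1:ℝ)/2 = -((1:ℝ)/2) := by norm_num
    simp only [e1, e2]
    rw [my_ibp ((1:ℝ)/2) (by norm_num) hx]
    rw [show (1:ℕ) - 1 = 0 from rfl, show Finset.Icc 1 0 = (∅ : Finset ℕ) from rfl]
    norm_num [Nat.doubleFactorial]
    ring
  | succ s hs ih =>
    have hsum : (∑ r ∈ Finset.Icc 1 (s + 1 - 1),
          (2:ℝ) ^ r * (-1:ℝ) ^ (r - 1) * ((2 * (s+1) - 2 * r - 1)‼ : ℝ)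
            * x ^ (-((((s+1) : ℕ) : ℝ) - (r : ℝ)) - 1/2))
        = 2 * ((2 * s - 1)‼ : ℝ) * x ^ (-(s:ℝ) - 1/2)
          - 2 * ∑ r ∈ Finset.Icc 1 (s - 1),
              (2:ℝ) ^ r * (-1:ℝ) ^ (r - 1) * ((2 * s - 2 * r - 1)‼ : ℝ)
                * x ^ (-((s:ℝ) - (r:ℝ)) - 1/2) := by
      obtain ⟨t, rfl⟩ : ∃ t, s = t + 1 := ⟨s - 1, (Nat.succ_pred_eq_of_pos hs).symm⟩
      rw [Nat.add_sub_cancel, Nat.add_sub_cancel, ← Finset.Ico_add_one_right_eq_Icc, ← Finset.Ico_add_one_right_eq_Icc,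
        Finset.sum_Ico_eq_sum_range, Finset.sum_Ico_eq_sum_range,
        Nat.add_sub_cancel, Finset.sum_range_succ']
      have hterm : ∀ i ∈ Finset.range t,
          (2:ℝ) ^ (1 + (i + 1)) * (-1:ℝ) ^ ((1 + (i + 1)) - 1)
              * ((2 * (t + 1 + 1) - 2 * (1 + (i + 1)) - 1)‼ : ℝ)
              * x ^ (-((((t + 1 + 1) : ℕ) : ℝ) - ((1 + (i + 1) : ℕ) : ℝ)) - 1/2)
          = (-2) * ((2:ℝ) ^ (1 + i) * (-1:ℝ) ^ ((1 + i) - 1)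
              * ((2 * (t + 1) - 2 * (1 + i) - 1)‼ : ℝ)
              * x ^ (-((((t + 1) : ℕ) : ℝ) - ((1 + i : ℕ) : ℝ)) - 1/2)) := by
        intro i hi
        rw [show 2 * (t + 1 + 1) - 2 * (1 + (i + 1)) - 1 = 2 * (t + 1) - 2 * (1 + i) - 1 by omega,
          show 1 + (i + 1) - 1 = i + 1 by omega, show 1 + i - 1 = i by omega,
          show (-((((t + 1 + 1) : ℕ) : ℝ) - ((1 + (i + 1) : ℕ) : ℝ)) - 1/2)
            = (-((((t + 1) : ℕ) : ℝ) - ((1 + i : ℕ) : ℝ)) - 1/2) by push_cast; ring]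
        ring
      rw [Finset.sum_congr rfl hterm, ← Finset.mul_sum]
      rw [show 2 * (t + 1 + 1) - 2 * (1 + 0) - 1 = 2 * (t + 1) - 1 by omega,
        show (-((((t + 1 + 1) : ℕ) : ℝ) - ((1 + 0 : ℕ) : ℝ)) - 1/2)
          = (-(((t+1 : ℕ)):ℝ) - 1/2) by push_cast; ring]
      norm_num
      ring
    have e1 : -((((s+1) : ℕ) : ℝ) + 1/2) = -(((s:ℝ) + 1/2) + 1) := by push_cast; ring
    simp only [e1]
    rw [my_ibp ((s:ℝ) + 1/2) (by positivity) hx, ih, hsum]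
    have hD : (2 * (s + 1) - 1)‼ = (2 * s + 1) * (2 * s - 1)‼ := by
      rw [show 2 * (s + 1) - 1 = (2 * s - 1) + 2 by omega, Nat.doubleFactorial_add_two]
      congr 1
      omega
    rw [hD, show s + 1 - 1 = s by omega,
      show (-1:ℝ) ^ s = -(-1:ℝ) ^ (s - 1) by
        conv_lhs => rw [show s = (s - 1) + 1 from (Nat.succ_pred_eq_of_pos hs).symm]
        rw [pow_succ]; ring,
      show (-((s:ℝ) + 1/2)) = (-(s:ℝ) - 1/2) by ring]
    have hDne : (((2 * s - 1)‼ : ℕ) : ℝ) ≠ 0 := Nat.cast_ne_zero.mpr (Nat.doubleFactorial_pos _).ne'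
    have h2s : ((2 * s + 1 : ℕ) : ℝ) ≠ 0 := by positivity
    have hshalf : (s:ℝ) + 1/2 ≠ 0 := by positivity
    push_cast
    field_simp
    ring
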